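/- Let f ∈ 1-AC(ℝⁿ,ℝˡ) and let v = e₁ + e₂ + … + e_n. Then the set E = { u ∈ ℝⁿ : limsup_{t→0} |f(u + tv) − f(u)| / |t| = ∞ } has n-dimensional Lebesgue measure zero. -/

import Mathlib

open MeasureTheory Metric Set Filter

noncomputable section

/-- The closed interval (box) `[a,b]` in `ℝⁿ`. -/
def box {n : ℕ} (a b : EuclideanSpace ℝ (Fin n)) : Set (EuclideanSpace ℝ (Fin n)) :=
  {x | ∀ ν, a ν ≤ x ν ∧ x ν ≤ b ν}

/-- `f` is 1-absolutely continuous on `ℝⁿ`: for every `ε > 0` there is `δ > 0` such that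
for every finite collection of pairwise disjoint 1-regular intervals (cubes)
`[aᵢ,bᵢ] ⊆ ℝⁿ`, `∑ ℒⁿ([aᵢ,bᵢ]) < δ` implies `∑ |f(bᵢ) − f(aᵢ)|ⁿ < ε`. -/
def OneAC {n l : ℕ} (f : EuclideanSpace ℝ (Fin n) → EuclideanSpace ℝ (Fin l)) : Prop :=
  ∀ ε > 0, ∃ δ > 0, ∀ (k : ℕ) (a b : Fin k → EuclideanSpace ℝ (Fin n)),
    (∀ i, ∀ ν, a i ν ≤ b i ν) →
    (Pairwise fun i j => Disjoint (box (a i) (b i)) (box (a j) (b j))) →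
    (∀ i, (⨆ ν, |a i ν - b i ν|) ^ n ≤ (volume (box (a i) (b i))).toReal) →
    ∑ i, (volume (box (a i) (b i))).toReal < δ →
    ∑ i, ‖f (b i) - f (a i)‖ ^ n < ε

open scoped ENNReal NNReal

lemma box_eq_preimage {n : ℕ} (a b : EuclideanSpace ℝ (Fin n)) :
    box a b = (MeasurableEquiv.toLp 2 (Fin n → ℝ)).symm ⁻¹'
      (Set.Icc (fun ν => a ν) (fun ν => b ν)) := by
  ext x
  simp [box, Set.mem_Icc, Pi.le_def, forall_and, MeasurableEquiv.toLp]
  exact Iff.rfl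

lemma volume_box {n : ℕ} (a b : EuclideanSpace ℝ (Fin n)) :
    volume (box a b) = ∏ ν, ENNReal.ofReal (b ν - a ν) := by
  rw [box_eq_preimage,
    (EuclideanSpace.volume_preserving_symm_measurableEquiv_toLp (Fin n)).measure_preimage
      measurableSet_Icc.nullMeasurableSet]
  exact Real.volume_Icc_pi

abbrev vvec (n : ℕ) : EuclideanSpace ℝ (Fin n) := ∑ i, EuclideanSpace.single i (1:ℝ)

lemma vcoord {n : ℕ} (ν : Fin n) : vvec n ν = 1 := by
  classical
  have : vvec n ν = ∑ i, (EuclideanSpace.single i (1:ℝ)) ν :=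
    by rw [WithLp.ofLp_sum, Finset.sum_apply]
  rw [this]
  simp [EuclideanSpace.single_apply]

lemma coord_add_smul {n : ℕ} (u : EuclideanSpace ℝ (Fin n)) (c : ℝ) (ν : Fin n) :
    (u + c • vvec n) ν = u ν + c := by
  have h1 : (u + c • vvec n) ν = u ν + c * vvec n ν := rfl
  rw [h1, vcoord, mul_one]

lemma proj_apply' {n : ℕ} (ν : Fin n) (x : EuclideanSpace ℝ (Fin n)) :
    (EuclideanSpace.proj ν : EuclideanSpace ℝ (Fin n) →L[ℝ] ℝ) x = x ν := rfl

lemma isClosed_box {n : ℕ} (a b : EuclideanSpace ℝ (Fin n)) : IsClosed (box a b) := by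
  have : box a b = ⋂ ν, (EuclideanSpace.proj ν : EuclideanSpace ℝ (Fin n) →L[ℝ] ℝ) ⁻¹'
      (Set.Icc (a ν) (b ν)) := by
    ext x; simp [box, Set.mem_Icc, proj_apply']
  rw [this]
  exact isClosed_iInter fun ν => isClosed_Icc.preimage (EuclideanSpace.proj ν).continuous

lemma interior_box_nonempty {n : ℕ} (a b : EuclideanSpace ℝ (Fin n))
    (h : ∀ ν, a ν < b ν) : (interior (box a b)).Nonempty := by
  classical
  set O : Set (EuclideanSpace ℝ (Fin n)) := ⋂ ν,
    (EuclideanSpace.proj ν : EuclideanSpace ℝ (Fin n) →L[ℝ] ℝ) ⁻¹' (Set.Ioo (a ν) (b ν)) with hO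
  have hOopen : IsOpen O :=
    isOpen_iInter_of_finite fun ν => isOpen_Ioo.preimage (EuclideanSpace.proj ν).continuous
  have hsub : O ⊆ box a b := by
    intro x hx ν
    have := Set.mem_iInter.1 hx ν
    simp only [Set.mem_preimage, Set.mem_Ioo, proj_apply'] at this
    exact ⟨this.1.le, this.2.le⟩
  have hmem : a + (1/2 : ℝ) • (b - a) ∈ O := by
    refine Set.mem_iInter.2 fun ν => ?_
    simp only [Set.mem_preimage, Set.mem_Ioo, proj_apply']
    have hc : (a + (1/2 : ℝ) • (b - a)) ν = a ν + (1/2) * (b ν - a ν) := rfl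
    rw [hc]
    constructor <;> nlinarith [h ν]
  exact ⟨_, interior_maximal hsub hOopen hmem⟩

lemma abs_coord_le_dist {n : ℕ} (x u : EuclideanSpace ℝ (Fin n)) (ν : Fin n) :
    |x ν - u ν| ≤ dist x u := by
  rw [EuclideanSpace.dist_eq]
  have h1 : |x ν - u ν| = Real.sqrt (dist (x ν) (u ν) ^ 2) := by
    rw [Real.sqrt_sq_eq_abs, Real.dist_eq, abs_abs]
  rw [h1]
  apply Real.sqrt_le_sqrt
  exact Finset.single_le_sum (fun i _ => sq_nonneg (dist (x i) (u i))) (Finset.mem_univ ν)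

lemma dist_le_of_coord_le {n : ℕ} (x u : EuclideanSpace ℝ (Fin n)) {c : ℝ}
    (h : ∀ ν, |x ν - u ν| ≤ c) : dist x u ≤ Real.sqrt n * c := by
  rcases Nat.eq_zero_or_pos n with h0 | h0
  · subst h0
    rw [EuclideanSpace.dist_eq]
    simp
  have hc : 0 ≤ c := le_trans (abs_nonneg _) (h ⟨0, h0⟩)
  rw [EuclideanSpace.dist_eq]
  have hsum : ∑ ν, dist (x ν) (u ν) ^ 2 ≤ (n : ℝ) * c ^ 2 := by
    calc ∑ ν, dist (x ν) (u ν) ^ 2 ≤ ∑ _ν : Fin n, c ^ 2 := by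
          apply Finset.sum_le_sum
          intro ν _
          have hν := h ν
          rw [Real.dist_eq]
          nlinarith [abs_nonneg (x ν - u ν)]
      _ = (n : ℝ) * c ^ 2 := by simp [Finset.sum_const, Finset.card_univ]
  calc Real.sqrt (∑ ν, dist (x ν) (u ν) ^ 2) ≤ Real.sqrt ((n : ℝ) * c ^ 2) :=
        Real.sqrt_le_sqrt hsum
    _ = Real.sqrt n * c := by
        rw [Real.sqrt_mul (Nat.cast_nonneg n), Real.sqrt_sq hc]

lemma volume_cube {n : ℕ} (u : EuclideanSpace ℝ (Fin n)) {s r : ℝ} (h : s ≤ r) :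
    volume (box (u + s • vvec n) (u + r • vvec n)) = ENNReal.ofReal ((r - s) ^ n) := by
  rw [volume_box]
  have : ∀ ν : Fin n, (u + r • vvec n) ν - (u + s • vvec n) ν = r - s := by
    intro ν; rw [coord_add_smul, coord_add_smul]; ring
  calc (∏ ν, ENNReal.ofReal ((u + r • vvec n) ν - (u + s • vvec n) ν))
      = ∏ _ν : Fin n, ENNReal.ofReal (r - s) := by
        exact Finset.prod_congr rfl fun ν _ => by rw [this ν]
    _ = ENNReal.ofReal (r - s) ^ n := by
        rw [Finset.prod_const, Finset.card_univ, Fintype.card_fin]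
    _ = ENNReal.ofReal ((r - s) ^ n) := (ENNReal.ofReal_pow (by linarith) n).symm

lemma closedBall_subset_box {n : ℕ} (u : EuclideanSpace ℝ (Fin n)) {ρ : ℝ} :
    closedBall u ρ ⊆ box (u + (-ρ) • vvec n) (u + ρ • vvec n) := by
  intro x hx ν
  rw [mem_closedBall] at hx
  have h1 : |x ν - u ν| ≤ ρ := le_trans (abs_coord_le_dist x u ν) hx
  rw [abs_le] at h1
  rw [coord_add_smul, coord_add_smul]
  constructor <;> linarith [h1.1, h1.2]

/-- For `f ∈ 1-AC(ℝⁿ,ℝˡ)` and `v = e₁ + ⋯ + e_n`, the set of points `u` where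
`limsup_{t→0} |f(u+tv) − f(u)|/|t| = ∞` (i.e. the difference quotients are frequently
larger than every `M`) has `n`-dimensional Lebesgue measure zero. -/
theorem oneAC_lip_direction_ae_finite {n l : ℕ}
    (f : EuclideanSpace ℝ (Fin n) → EuclideanSpace ℝ (Fin l)) (hf : OneAC f) :
    volume {u : EuclideanSpace ℝ (Fin n) | ∀ M : ℝ,
      ∃ᶠ t in nhdsWithin (0:ℝ) {(0:ℝ)}ᶜ,
        M < ‖f (u + t • ∑ i, EuclideanSpace.single i (1:ℝ)) - f u‖ / |t|} = 0 := by
  classical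
  set E := {u : EuclideanSpace ℝ (Fin n) | ∀ M : ℝ,
      ∃ᶠ t in nhdsWithin (0:ℝ) {(0:ℝ)}ᶜ,
        M < ‖f (u + t • vvec n) - f u‖ / |t|} with hE
  show volume E = 0
  rcases Nat.eq_zero_or_pos n with hn0 | hn
  · -- n = 0 : the set is empty
    subst hn0
    have : E = ∅ := by
      rw [eq_empty_iff_forall_notMem]
      intro u hu
      obtain ⟨t, ht⟩ := (hu 0).exists
      have hv : (vvec 0 : EuclideanSpace ℝ (Fin 0)) = 0 := Subsingleton.elim _ _
      rw [hv, smul_zero, add_zero, sub_self, norm_zero, zero_div] at ht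
      exact lt_irrefl 0 ht
    rw [this, measure_empty]
  -- main case
  have hnne : n ≠ 0 := hn.ne'
  haveI : Nonempty (Fin n) := ⟨⟨0, hn⟩⟩
  suffices H : ∀ η : ℝ, 0 < η → volume E ≤ ENNReal.ofReal η by
    refine le_antisymm ?_ (zero_le)
    refine ENNReal.le_of_forall_pos_le_add (fun ε hε _ => ?_)
    rw [zero_add]
    calc volume E ≤ ENNReal.ofReal (ε : ℝ) := H ε (by exact_mod_cast hε)
      _ ≤ (ε : ℝ≥0∞) := by rw [ENNReal.ofReal_coe_nnreal]
  intro η hη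
  obtain ⟨δ₀, hδ₀, hAC⟩ := hf 1 one_pos
  obtain ⟨δ, hδpos, hδδ₀, hδη⟩ : ∃ δ : ℝ, 0 < δ ∧ δ ≤ δ₀ ∧ δ ≤ η :=
    ⟨min δ₀ η, lt_min hδ₀ hη, min_le_left _ _, min_le_right _ _⟩
  obtain ⟨M, hM1, hMgt⟩ : ∃ M : ℝ, 1 ≤ M ∧ 2 / δ < M := by
    refine ⟨2 / δ + 1, ?_, by linarith⟩
    have : 0 < 2 / δ := by positivity
    linarith
  have hM0 : 0 ≤ M := by linarith
  have hMn : 2 / δ < M ^ n := by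
    have h1 : M ≤ M ^ n := le_self_pow₀ hM1 hnne
    linarith
  -- the Vitali family of cubes
  set Bf : (EuclideanSpace ℝ (Fin n)) × ℝ → Set (EuclideanSpace ℝ (Fin n)) :=
    fun p => box (p.1 + (min p.2 0) • vvec n) (p.1 + (max p.2 0) • vvec n) with hBf
  set tfam : Set ((EuclideanSpace ℝ (Fin n)) × ℝ) :=
    {p | p.2 ≠ 0 ∧ abs p.2 ^ n < δ / 2 ∧ M * abs p.2 < ‖f (p.1 + p.2 • vvec n) - f p.1‖} with htfam
  have volBf : ∀ p : (EuclideanSpace ℝ (Fin n)) × ℝ,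
      volume (Bf p) = ENNReal.ofReal (|p.2| ^ n) := by
    intro p
    rw [hBf]
    have := volume_cube p.1 (min_le_max (a := p.2) (b := 0))
    rw [this]
    congr 1
    rw [max_sub_min_eq_abs, zero_sub, abs_neg]
  have hB : ∀ p ∈ tfam, Bf p ⊆ closedBall p.1 (Real.sqrt n * |p.2|) := by
    intro p _ x hx
    rw [mem_closedBall]
    apply dist_le_of_coord_le x p.1
    intro ν
    have h := hx ν
    rw [coord_add_smul, coord_add_smul] at h
    have h1 : -|p.2| ≤ min p.2 0 := le_min (neg_abs_le p.2) (neg_nonpos.mpr (abs_nonneg p.2))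
    have h2 : max p.2 0 ≤ |p.2| := max_le (le_abs_self p.2) (abs_nonneg p.2)
    rw [abs_le]
    constructor <;> [linarith [h.1]; linarith [h.2]]
  have hμB : ∀ p ∈ tfam, volume (closedBall p.1 (3 * (Real.sqrt n * |p.2|))) ≤
      ((6 * Real.sqrt n) ^ n).toNNReal * volume (Bf p) := by
    intro p _
    have hρ : (0:ℝ) ≤ 3 * (Real.sqrt n * |p.2|) := by positivity
    have hsub := closedBall_subset_box (ρ := 3 * (Real.sqrt n * |p.2|)) p.1
    calc volume (closedBall p.1 (3 * (Real.sqrt n * |p.2|)))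
        ≤ volume (box (p.1 + (-(3 * (Real.sqrt n * |p.2|))) • vvec n)
            (p.1 + (3 * (Real.sqrt n * |p.2|)) • vvec n)) := measure_mono hsub
      _ = ENNReal.ofReal ((3 * (Real.sqrt n * |p.2|) - -(3 * (Real.sqrt n * |p.2|))) ^ n) :=
          volume_cube p.1 (by linarith)
      _ = ENNReal.ofReal ((6 * Real.sqrt n) ^ n * |p.2| ^ n) := by
          rw [← mul_pow]; congr 2; ring
      _ = ENNReal.ofReal ((6 * Real.sqrt n) ^ n) * ENNReal.ofReal (|p.2| ^ n) :=
          ENNReal.ofReal_mul (by positivity)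
      _ = ((6 * Real.sqrt n) ^ n).toNNReal * volume (Bf p) := by
          rw [volBf p]; rfl
  have hint : ∀ p ∈ tfam, (interior (Bf p)).Nonempty := by
    intro p hp
    apply interior_box_nonempty
    intro ν
    rw [coord_add_smul, coord_add_smul]
    have : min p.2 0 < max p.2 0 := min_lt_max.mpr hp.1
    linarith
  have hclosed : ∀ p ∈ tfam, IsClosed (Bf p) := fun p _ => isClosed_box _ _
  have hfine : ∀ x ∈ E, ∀ ε > (0:ℝ), ∃ p ∈ tfam, Real.sqrt n * |p.2| ≤ ε ∧ p.1 = x := by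
    intro x hx ε hε
    have hs : (0:ℝ) < Real.sqrt n + 1 := by positivity
    set b := min (ε / (Real.sqrt n + 1)) (min 1 (δ / 2)) with hbdef
    have hb : 0 < b := lt_min (by positivity) (lt_min one_pos (by linarith))
    have hev1 : ∀ᶠ t in nhdsWithin (0:ℝ) {(0:ℝ)}ᶜ, |t| < b := by
      apply eventually_nhdsWithin_of_eventually_nhds
      have hmem : Set.Ioo (-b) b ∈ nhds (0:ℝ) := Ioo_mem_nhds (by linarith) hb
      filter_upwards [hmem] with t ht
      rw [abs_lt]; exact ⟨ht.1, ht.2⟩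
    have hev2 : ∀ᶠ t in nhdsWithin (0:ℝ) {(0:ℝ)}ᶜ, t ≠ 0 := by
      filter_upwards [self_mem_nhdsWithin] with t ht
      exact ht
    obtain ⟨t, hMt, htb, ht0⟩ := ((hx M).and_eventually (hev1.and hev2)).exists
    have htb1 : |t| ≤ 1 := le_of_lt (lt_of_lt_of_le htb ((min_le_right _ _).trans (min_le_left _ _)))
    have htbδ : |t| < δ / 2 := lt_of_lt_of_le htb ((min_le_right _ _).trans (min_le_right _ _))
    have htbε : |t| < ε / (Real.sqrt n + 1) := lt_of_lt_of_le htb (min_le_left _ _)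
    refine ⟨(x, t), ⟨ht0, ?_, ?_⟩, ?_, rfl⟩
    · have h1 : |t| ^ n ≤ |t| := pow_le_of_le_one (abs_nonneg t) htb1 hnne
      exact lt_of_le_of_lt h1 htbδ
    · exact (lt_div_iff₀ (abs_pos.mpr ht0)).mp hMt
    · have h2 : |t| * (Real.sqrt n + 1) < ε := (lt_div_iff₀ hs).mp htbε
      nlinarith [Real.sqrt_nonneg (n:ℝ), abs_nonneg t]
  obtain ⟨U, hUt, hUcount, hUdisj, hUcov⟩ :=
    Vitali.exists_disjoint_covering_ae volume E tfam ((6 * Real.sqrt n) ^ n).toNNReal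
      (fun p => Real.sqrt n * |p.2|) (fun p => p.1) Bf hB hμB hint hclosed hfine
  have key : ∀ (m : ℕ) (F : Finset (EuclideanSpace ℝ (Fin n) × ℝ)), F.card ≤ m →
      ↑F ⊆ U → ∑ p ∈ F, |p.2| ^ n < δ / 2 := by
    intro m
    induction m with
    | zero =>
      intro F hc _
      have hF : F = ∅ := Finset.card_eq_zero.mp (Nat.le_zero.mp hc)
      subst hF
      simpa using (by linarith : (0:ℝ) < δ / 2)
    | succ m ih =>
      intro F hc hFU
      by_contra hge
      push_neg at hge
      have hFne : F.Nonempty := by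
        rcases F.eq_empty_or_nonempty with h | h
        · exfalso; subst h; simp at hge; linarith
        · exact h
      obtain ⟨q, hq⟩ := hFne
      have hSerase : ∑ p ∈ F.erase q, |p.2| ^ n < δ / 2 := by
        refine ih _ ?_ ((Finset.coe_subset.mpr (F.erase_subset q)).trans hFU)
        have := Finset.card_erase_of_mem hq
        omega
      have hqsmall : |q.2| ^ n < δ / 2 := (hUt (hFU hq)).2.1
      have hSF : ∑ p ∈ F, |p.2| ^ n < δ := by
        have hsum := Finset.sum_erase_add F (fun p => |p.2| ^ n) hq
        have : ∑ p ∈ F.erase q, |p.2| ^ n + |q.2| ^ n < δ / 2 + δ / 2 := by linarith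
        linarith [hsum ▸ this]
      -- apply absolute continuity to the cubes of F
      set k := F.card with hk
      set e := F.equivFin.symm with he
      set g : Fin k → EuclideanSpace ℝ (Fin n) × ℝ := fun i => ((e i : F) : _) with hg
      set A : Fin k → EuclideanSpace ℝ (Fin n) := fun i => (g i).1 + (min (g i).2 0) • vvec n
        with hA
      set Bb : Fin k → EuclideanSpace ℝ (Fin n) := fun i => (g i).1 + (max (g i).2 0) • vvec n
        with hBb
      have hginj : Function.Injective g := fun i j hij => e.injective (Subtype.ext hij)
      have hgF : ∀ i, g i ∈ F := fun i => (e i).2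
      have hBfg : ∀ i, box (A i) (Bb i) = Bf (g i) := fun i => rfl
      have hab : ∀ i ν, A i ν ≤ Bb i ν := by
        intro i ν
        rw [hA, hBb]
        simp only []
        rw [coord_add_smul, coord_add_smul]
        exact add_le_add_right min_le_max _
      have hdisj : Pairwise fun i j => Disjoint (box (A i) (Bb i)) (box (A j) (Bb j)) := by
        intro i j hij
        rw [hBfg i, hBfg j]
        exact hUdisj (hFU (hgF i)) (hFU (hgF j)) (fun h => hij (hginj h))
      have hvolR : ∀ i, (volume (box (A i) (Bb i))).toReal = |(g i).2| ^ n := by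
        intro i
        rw [hBfg i, volBf (g i), ENNReal.toReal_ofReal (by positivity)]
      have hreg : ∀ i, (⨆ ν, |A i ν - Bb i ν|) ^ n ≤ (volume (box (A i) (Bb i))).toReal := by
        intro i
        have hcoord : ∀ ν, |A i ν - Bb i ν| = |(g i).2| := by
          intro ν
          rw [hA, hBb]
          simp only []
          rw [coord_add_smul, coord_add_smul]
          have : (g i).1 ν + min (g i).2 0 - ((g i).1 ν + max (g i).2 0)
              = -(max (g i).2 0 - min (g i).2 0) := by ring
          rw [this, abs_neg, max_sub_min_eq_abs]
          simp
        have hsup : (⨆ ν, |A i ν - Bb i ν|) = |(g i).2| := by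
          rw [show (fun ν => |A i ν - Bb i ν|) = fun _ => |(g i).2| from funext hcoord]
          exact ciSup_const
        rw [hsup, hvolR i]
      have hsum_g : ∀ h : EuclideanSpace ℝ (Fin n) × ℝ → ℝ,
          ∑ i, h (g i) = ∑ p ∈ F, h p := by
        intro h
        rw [← Finset.sum_coe_sort F h]
        exact Fintype.sum_equiv e (fun i => h (g i)) (fun x => h x) (fun i => rfl)
      have hSvol : ∑ i, (volume (box (A i) (Bb i))).toReal < δ₀ := by
        have h1 : ∑ i, (volume (box (A i) (Bb i))).toReal = ∑ i, |(g i).2| ^ n :=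
          Finset.sum_congr rfl fun i _ => hvolR i
        rw [h1, hsum_g (fun p => |p.2| ^ n)]
        linarith
      have hACres : ∑ i, ‖f (Bb i) - f (A i)‖ ^ n < 1 := hAC k A Bb hab hdisj hreg hSvol
      have hlow : ∀ i, (M * |(g i).2|) ^ n < ‖f (Bb i) - f (A i)‖ ^ n := by
        intro i
        obtain ⟨ht0, _, hMt⟩ := hUt (hFU (hgF i))
        have hnorm : ‖f (Bb i) - f (A i)‖ = ‖f ((g i).1 + (g i).2 • vvec n) - f (g i).1‖ := by
          rcases le_or_gt 0 (g i).2 with h | h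
          · have hmin : min (g i).2 0 = 0 := min_eq_right h
            have hmax : max (g i).2 0 = (g i).2 := max_eq_left h
            rw [hA, hBb]
            simp only []
            rw [hmin, hmax, zero_smul, add_zero]
          · have hmin : min (g i).2 0 = (g i).2 := min_eq_left h.le
            have hmax : max (g i).2 0 = 0 := max_eq_right h.le
            rw [hA, hBb]
            simp only []
            rw [hmin, hmax, zero_smul, add_zero, norm_sub_rev]
        rw [hnorm]
        exact pow_lt_pow_left₀ hMt (by positivity) hnne
      have hsum_low : ∑ i, (M * |(g i).2|) ^ n < 1 :=
        lt_of_le_of_lt (Finset.sum_le_sum fun i _ => (hlow i).le) hACres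
      have hfactor : ∑ i, (M * |(g i).2|) ^ n = M ^ n * ∑ p ∈ F, |p.2| ^ n := by
        rw [← hsum_g (fun p => |p.2| ^ n), Finset.mul_sum]
        exact Finset.sum_congr rfl fun i _ => by rw [mul_pow]
      rw [hfactor] at hsum_low
      have hMpos : 0 < M ^ n := by positivity
      have h2δ : 2 / δ * δ = 2 := div_mul_cancel₀ 2 (ne_of_gt hδpos)
      nlinarith
  -- conclusion
  have hcover : volume E ≤ volume (⋃ p ∈ U, Bf p) := by
    calc volume E ≤ volume ((E \ ⋃ p ∈ U, Bf p) ∪ ⋃ p ∈ U, Bf p) :=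
          measure_mono (Set.subset_diff_union E _)
      _ ≤ volume (E \ ⋃ p ∈ U, Bf p) + volume (⋃ p ∈ U, Bf p) := measure_union_le _ _
      _ = volume (⋃ p ∈ U, Bf p) := by rw [hUcov, zero_add]
  have htsum : volume (⋃ p ∈ U, Bf p) ≤ ∑' p : U, volume (Bf p) :=
    measure_biUnion_le volume hUcount Bf
  have hbound : ∑' p : U, volume (Bf p) ≤ ENNReal.ofReal (δ / 2) := by
    rw [ENNReal.tsum_eq_iSup_sum]
    refine iSup_le fun G => ?_
    have hGsum : ∑ i ∈ G, volume (Bf (i : EuclideanSpace ℝ (Fin n) × ℝ))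
        = ENNReal.ofReal (∑ i ∈ G, |(i : EuclideanSpace ℝ (Fin n) × ℝ).2| ^ n) := by
      rw [ENNReal.ofReal_sum_of_nonneg (fun i _ => by positivity)]
      exact Finset.sum_congr rfl fun i _ => volBf _
    rw [hGsum]
    apply ENNReal.ofReal_le_ofReal
    have himg := Finset.sum_image (s := G) (g := Subtype.val)
      (f := fun p : EuclideanSpace ℝ (Fin n) × ℝ => |p.2| ^ n)
      (fun x _ y _ h => Subtype.coe_injective h)
    rw [← himg]
    refine (key (G.image Subtype.val).card _ le_rfl ?_).le
    intro p hp
    simp only [Finset.coe_image, Set.mem_image, Finset.mem_coe] at hp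
    obtain ⟨i, _, rfl⟩ := hp
    exact i.2
  calc volume E ≤ ∑' p : U, volume (Bf p) := le_trans hcover htsum
    _ ≤ ENNReal.ofReal (δ / 2) := hbound
    _ ≤ ENNReal.ofReal η := ENNReal.ofReal_le_ofReal (by linarith)
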